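/- Let X, E, F be Banach spaces, B the open unit ball of X, ξ ∈ ∂B, P: B → Hom(E,F) holomorphic, and suppose every Pe (e ∈ E) continues analytically across ξ. Then there exist constants p, ε > 0 such that the set E_{p,ε} = { e ∈ E : ‖∂^k P(η)e‖_F ≤ p·k!·(1/2+ε)^{-k} for all k ∈ ℕ and all η with ‖η − ξ/2‖ < ε } has nonempty interior in E, where ∂^k denotes the k-th iterated directional derivative in the direction ξ. -/

import Mathlib

open Metric

variable {E' : Type*} [NormedAddCommGroup E'] [NormedSpace ℂ E']
variable {F' : Type*} [NormedAddCommGroup F'] [NormedSpace ℂ F']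

/-- Evaluation commutes with iterated derivatives of an operator-valued map. -/
lemma eval_iteratedDeriv {g : ℂ → E' →L[ℂ] F'} {s : Set ℂ} (hs : IsOpen s)
    (hg : ContDiffOn ℂ ⊤ g s) {x : ℂ} (hx : x ∈ s) (e : E') (n : ℕ) :
    iteratedDeriv n (fun z => g z e) x = (iteratedDeriv n g x) e := by
  have h1 : (fun z => g z e) = (ContinuousLinearMap.apply ℂ F' e) ∘ g := rfl
  rw [iteratedDeriv_eq_iteratedFDeriv, iteratedDeriv_eq_iteratedFDeriv, h1,
    ← iteratedFDerivWithin_of_isOpen (f := (ContinuousLinearMap.apply ℂ F' e) ∘ g) n hs hx,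
    ← iteratedFDerivWithin_of_isOpen (f := g) n hs hx,
    ContinuousLinearMap.iteratedFDerivWithin_comp_left _ (hg x hx) hs.uniqueDiffOn hx le_top]
  rfl

/-- Cauchy estimate. -/
lemma cauchy_estimate [CompleteSpace F'] {f : ℂ → F'} {R M : ℝ} (hR : 0 < R)
    (hf : DifferentiableOn ℂ f (closedBall 0 R))
    (hM : ∀ z ∈ closedBall (0 : ℂ) R, ‖f z‖ ≤ M) (k : ℕ) :
    ‖iteratedDeriv k f 0‖ ≤ M * (Nat.factorial k) * (R⁻¹) ^ k := by
  lift R to NNReal using hR.le with R' hR'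
  have hR0 : (0 : NNReal) < R' := by exact_mod_cast hR
  have h := hf.hasFPowerSeriesOnBall hR0
  have hfac := h.factorial_smul 1 k
  have hM0 : 0 ≤ M := le_trans (norm_nonneg _) (hM 0 (mem_closedBall_self hR.le))
  have hiter : iteratedDeriv k f 0
      = (Nat.factorial k) • (cauchyPowerSeries f 0 R' k fun _ => 1) := by
    rw [iteratedDeriv_eq_iteratedFDeriv, ← hfac]
  rw [hiter]
  have hbound : ‖cauchyPowerSeries f 0 R' k fun _ => (1:ℂ)‖ ≤ M * ((R':ℝ)⁻¹) ^ k := by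
    refine le_trans ((cauchyPowerSeries f 0 R' k).le_opNorm _) ?_
    simp only [norm_one, Finset.prod_const_one, mul_one]
    refine le_trans (norm_cauchyPowerSeries_le f 0 R' k) ?_
    have habs : |(R' : ℝ)| = (R' : ℝ) := abs_of_nonneg R'.coe_nonneg
    rw [habs]
    refine mul_le_mul_of_nonneg_right ?_ (by positivity)
    have hcont : ContinuousOn (fun θ : ℝ => ‖f (circleMap 0 R' θ)‖)
        (Set.uIcc 0 (2 * Real.pi)) := by
      apply ContinuousOn.norm
      apply hf.continuousOn.comp (continuous_circleMap 0 R').continuousOn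
      intro θ _
      simpa using circleMap_mem_closedBall (0:ℂ) R'.coe_nonneg θ
    have hint : ∫ θ : ℝ in (0)..2 * Real.pi, ‖f (circleMap 0 R' θ)‖ ≤ M * (2 * Real.pi) := by
      have := intervalIntegral.integral_mono_on (a := 0) (b := 2 * Real.pi)
        (μ := MeasureTheory.volume)
        Real.two_pi_pos.le (hcont.intervalIntegrable) (intervalIntegrable_const (c := M))
        (fun θ _ => hM _ (by simpa using circleMap_mem_closedBall (0:ℂ) R'.coe_nonneg θ))
      simpa [mul_comm] using this
    calc (2 * Real.pi)⁻¹ * ∫ θ : ℝ in (0)..2 * Real.pi, ‖f (circleMap 0 R' θ)‖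
        ≤ (2 * Real.pi)⁻¹ * (M * (2 * Real.pi)) :=
          mul_le_mul_of_nonneg_left hint (by positivity)
      _ = M := by field_simp
  calc ‖(Nat.factorial k) • (cauchyPowerSeries f 0 R' k fun _ => (1:ℂ))‖
      = (Nat.factorial k) * ‖cauchyPowerSeries f 0 R' k fun _ => (1:ℂ)‖ := by
        rw [Nat.cast_smul_eq_nsmul ℝ (Nat.factorial k) _ |>.symm, norm_smul]; simp
    _ ≤ (Nat.factorial k) * (M * ((R':ℝ)⁻¹) ^ k) :=
        mul_le_mul_of_nonneg_left hbound (by positivity)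
    _ = M * (Nat.factorial k) * ((R':ℝ)⁻¹) ^ k := by ring

set_option maxHeartbeats 1000000 in

/-- Let `X, E, F` be Banach spaces, `B` the open unit ball of `X`, `ξ ∈ ∂B`,
`P : B → Hom(E,F)` holomorphic, and suppose every `Pe` (`e ∈ E`) continues
analytically across `ξ`.  Then there are constants `p, ε > 0` such that the set
`E_{p,ε}` of those `e ∈ E` with
`‖∂^k P(η) e‖ ≤ p · k! · (1/2 + ε)^{-k}` for all `k ∈ ℕ` and all `η` with
`‖η − ξ/2‖ < ε` has nonempty interior in `E`.  (Here `∂^k` is the `k`-th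
iterated derivative in the direction `ξ`.) -/
theorem exists_interior_point_of_cauchy_estimates
    {X : Type} [NormedAddCommGroup X] [NormedSpace ℂ X] [CompleteSpace X]
    {E : Type} [NormedAddCommGroup E] [NormedSpace ℂ E] [CompleteSpace E]
    {F : Type} [NormedAddCommGroup F] [NormedSpace ℂ F] [CompleteSpace F]
    (ξ : X) (hξ : ‖ξ‖ = 1)
    (P : X → E →L[ℂ] F) (hP : DifferentiableOn ℂ P (ball 0 1))
    (hext : ∀ e : E, ∃ W : Set X, IsOpen W ∧ ξ ∈ W ∧
      ∃ g : X → F, DifferentiableOn ℂ g (ball 0 1 ∪ W) ∧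
        Set.EqOn g (fun x => P x e) (ball 0 1 ∩ W)) :
    ∃ p : ℝ, 0 < p ∧ ∃ ε : ℝ, 0 < ε ∧
      (interior {e : E | ∀ (k : ℕ) (η : X), ‖η - ((1 : ℂ)/2) • ξ‖ < ε →
        ‖iteratedDeriv k (fun z : ℂ => P (η + z • ξ) e) 0‖ ≤
          p * (Nat.factorial k) * ((1/2 + ε)⁻¹) ^ k}).Nonempty := by
  classical
  have h12 : ‖((1:ℂ)/2)‖ = 1/2 := by norm_num
  -- points on short segments near ξ/2 stay inside the unit ball
  have hkey : ∀ ε : ℝ, ε ≤ 8⁻¹ → ∀ η : X, ‖η - ((1:ℂ)/2) • ξ‖ < ε →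
      ∀ z : ℂ, ‖z‖ < 4⁻¹ → η + z • ξ ∈ ball (0:X) 1 := by
    intro ε hε η hη z hz
    rw [mem_ball_zero_iff]
    have hdecomp : η + z • ξ = (η - ((1:ℂ)/2) • ξ) + (((1:ℂ)/2 + z) • ξ) := by
      rw [add_smul]; abel
    rw [hdecomp]
    have h1 : ‖(((1:ℂ)/2 + z)) • ξ‖ = ‖(1:ℂ)/2 + z‖ := by rw [norm_smul, hξ, mul_one]
    have h2 : ‖(1:ℂ)/2 + z‖ ≤ 1/2 + ‖z‖ := by
      calc ‖(1:ℂ)/2 + z‖ ≤ ‖(1:ℂ)/2‖ + ‖z‖ := norm_add_le _ _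
        _ = 1/2 + ‖z‖ := by rw [h12]
    calc ‖(η - ((1:ℂ)/2) • ξ) + (((1:ℂ)/2 + z) • ξ)‖
        ≤ ‖η - ((1:ℂ)/2) • ξ‖ + ‖(((1:ℂ)/2 + z)) • ξ‖ := norm_add_le _ _
      _ < 1 := by rw [h1]; linarith
  set U : ℕ × ℕ → Set E := fun nm =>
    {e : E | ∀ (k : ℕ) (η : X), ‖η - ((1 : ℂ)/2) • ξ‖ < (((nm.2:ℝ)) + 8)⁻¹ →
      ‖iteratedDeriv k (fun z : ℂ => P (η + z • ξ) e) 0‖ ≤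
        ((nm.1:ℝ) + 1) * (Nat.factorial k) * ((1/2 + (((nm.2:ℝ)) + 8)⁻¹)⁻¹) ^ k} with hUdef
  have hεm8 : ∀ m : ℕ, ((m:ℝ) + 8)⁻¹ ≤ 8⁻¹ := by
    intro m
    apply inv_anti₀ (by norm_num)
    have : (0:ℝ) ≤ (m:ℝ) := Nat.cast_nonneg m
    linarith
  -- closedness
  have hclosed : ∀ nm : ℕ × ℕ, IsClosed (U nm) := by
    rintro ⟨n, m⟩
    have hset : U (n, m) = ⋂ (k : ℕ), ⋂ (η : X),
        ⋂ (_ : ‖η - ((1 : ℂ)/2) • ξ‖ < ((m:ℝ) + 8)⁻¹),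
        {e : E | ‖iteratedDeriv k (fun z : ℂ => P (η + z • ξ) e) 0‖ ≤
          ((n:ℝ) + 1) * (Nat.factorial k) * ((1/2 + ((m:ℝ) + 8)⁻¹)⁻¹) ^ k} := by
      ext e
      simp only [hUdef, Set.mem_iInter, Set.mem_setOf_eq]
    rw [hset]
    refine isClosed_iInter fun k => isClosed_iInter fun η => isClosed_iInter fun hη => ?_
    have hdiff : ContDiffOn ℂ ⊤ (fun z : ℂ => P (η + z • ξ)) (ball (0:ℂ) 4⁻¹) := by
      apply DifferentiableOn.contDiffOn _ isOpen_ball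
      intro z hz
      have hmem : η + z • ξ ∈ ball (0:X) 1 :=
        hkey _ (hεm8 m) η hη z (mem_ball_zero_iff.1 hz)
      have houter : DifferentiableAt ℂ P (η + z • ξ) :=
        hP.differentiableAt (isOpen_ball.mem_nhds hmem)
      have hinner : DifferentiableAt ℂ (fun z : ℂ => η + z • ξ) z :=
        ((differentiable_const η).add (differentiable_id.smul_const ξ)).differentiableAt
      exact (houter.comp z hinner).differentiableWithinAt
    have heval : ∀ e : E, iteratedDeriv k (fun z : ℂ => P (η + z • ξ) e) 0
        = (iteratedDeriv k (fun z : ℂ => P (η + z • ξ)) 0) e := fun e =>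
      eval_iteratedDeriv isOpen_ball hdiff (mem_ball_self (by norm_num)) e k
    have hrw : {e : E | ‖iteratedDeriv k (fun z : ℂ => P (η + z • ξ) e) 0‖ ≤
          ((n:ℝ) + 1) * (Nat.factorial k) * ((1/2 + ((m:ℝ) + 8)⁻¹)⁻¹) ^ k}
        = (fun e : E => ‖(iteratedDeriv k (fun z : ℂ => P (η + z • ξ)) 0) e‖) ⁻¹'
            Set.Iic (((n:ℝ) + 1) * (Nat.factorial k) * ((1/2 + ((m:ℝ) + 8)⁻¹)⁻¹) ^ k) := by
      ext e
      simp [heval e]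
    rw [hrw]
    exact isClosed_Iic.preimage ((iteratedDeriv k (fun z : ℂ => P (η + z • ξ)) 0).continuous.norm)
  -- covering
  have hcover : ⋃ nm : ℕ × ℕ, U nm = Set.univ := by
    rw [Set.eq_univ_iff_forall]
    intro e
    rw [Set.mem_iUnion]
    obtain ⟨W, hWopen, hξW, g, hg, heqg⟩ := hext e
    have hΩopen : IsOpen (ball (0:X) 1 ∪ W) := isOpen_ball.union hWopen
    obtain ⟨r0, hr0, hballr0⟩ := Metric.isOpen_iff.1 hWopen ξ hξW
    set r : ℝ := min r0 1 with hrdef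
    have hrpos : 0 < r := lt_min hr0 one_pos
    have hr1 : r ≤ 1 := min_le_right r0 1
    have hballr : ball ξ r ⊆ W := fun x hx => hballr0 (ball_subset_ball (min_le_left r0 1) hx)
    -- the compact core segment
    set C : Set X := (fun w : ℂ => w • ξ) '' closedBall ((1:ℂ)/2) (1/2) with hCdef
    have hCcompact : IsCompact C :=
      (isCompact_closedBall _ _).image (continuous_id.smul continuous_const)
    have hCU : C ⊆ ball (0:X) 1 ∪ W := by
      rintro _ ⟨w, hw, rfl⟩
      rw [mem_closedBall, Complex.dist_eq] at hw
      by_cases h1 : ‖w‖ < 1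
      · left; rw [mem_ball_zero_iff, norm_smul, hξ, mul_one]; exact h1
      · right
        have hwnorm : ‖w‖ ≤ 1 := by
          have hww : w = (w - (1:ℂ)/2) + (1:ℂ)/2 := by ring
          calc ‖w‖ = ‖(w - (1:ℂ)/2) + (1:ℂ)/2‖ := by rw [← hww]
            _ ≤ ‖w - (1:ℂ)/2‖ + ‖(1:ℂ)/2‖ := norm_add_le _ _
            _ ≤ 1 := by rw [h12]; linarith
        have hwe : ‖w‖ = 1 := le_antisymm hwnorm (not_lt.1 h1)
        have hw1 : w = 1 := by
          have hsq : Complex.normSq (w - (1:ℂ)/2) ≤ (1/2)^2 := by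
            have hn : ‖w - (1:ℂ)/2‖^2 ≤ (1/2)^2 := by
              apply sq_le_sq' <;> [linarith [norm_nonneg (w - (1:ℂ)/2)]; exact hw]
            rwa [← Complex.normSq_eq_norm_sq] at hn
          have hsq1 : Complex.normSq w = 1 := by
            have hh : ‖w‖^2 = 1 := by rw [hwe]; norm_num
            rwa [← Complex.normSq_eq_norm_sq] at hh
          have hhalf : (1:ℂ)/2 = (((1:ℝ)/2 : ℝ) : ℂ) := by norm_num
          rw [Complex.normSq_apply] at hsq1
          rw [hhalf, Complex.normSq_apply] at hsq
          simp only [Complex.sub_re, Complex.sub_im, Complex.ofReal_re, Complex.ofReal_im,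
            sub_zero] at hsq
          apply Complex.ext
          · simp only [Complex.one_re]; nlinarith [hsq, hsq1]
          · simp only [Complex.one_im]; nlinarith [hsq, hsq1]
        rw [hw1]
        simpa using hξW
    -- local boundedness near C
    have hloc : ∀ c ∈ C, ∃ ρ > (0:ℝ), ball c ρ ⊆ ball (0:X) 1 ∪ W ∧
        ∀ x ∈ ball c ρ, ‖g x‖ ≤ ‖g c‖ + 1 := by
      intro c hc
      have hgc : ContinuousAt g c :=
        (hg.differentiableAt (hΩopen.mem_nhds (hCU hc))).continuousAt
      have h1 : ∀ᶠ x in nhds c, ‖g x‖ < ‖g c‖ + 1 :=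
        hgc.norm.eventually_lt_const (by linarith)
      have h2 : (ball (0:X) 1 ∪ W) ∈ nhds c := hΩopen.mem_nhds (hCU hc)
      obtain ⟨ρ, hρ, hsub⟩ := Metric.mem_nhds_iff.1 (Filter.inter_mem h2 h1)
      exact ⟨ρ, hρ, fun x hx => (hsub hx).1, fun x hx => (hsub hx).2.le⟩
    choose! ρ hρpos hρsub hρbd using hloc
    obtain ⟨tset, htsub, htcover⟩ := hCcompact.elim_nhds_subcover (fun c => ball c (ρ c))
      (fun c hc => ball_mem_nhds c (hρpos c hc))
    set V : Set X := ⋃ c ∈ tset, ball c (ρ c) with hVdef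
    have hVopen : IsOpen V := isOpen_biUnion fun c _ => isOpen_ball
    set M : ℝ := ∑ c ∈ tset, (‖g c‖ + 1) with hMdef
    have hVsub : V ⊆ ball (0:X) 1 ∪ W := by
      intro x hx
      obtain ⟨c, hct, hxc⟩ := Set.mem_iUnion₂.1 hx
      exact hρsub c (htsub c hct) hxc
    have hVbd : ∀ x ∈ V, ‖g x‖ ≤ M := by
      intro x hx
      obtain ⟨c, hct, hxc⟩ := Set.mem_iUnion₂.1 hx
      calc ‖g x‖ ≤ ‖g c‖ + 1 := hρbd c (htsub c hct) x hxc
        _ ≤ M := Finset.single_le_sum (f := fun c => ‖g c‖ + 1)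
            (fun c _ => by positivity) hct
    obtain ⟨δ, hδpos, hδsub⟩ := hCcompact.exists_thickening_subset_open hVopen htcover
    -- choose m
    obtain ⟨m, hm⟩ := exists_nat_gt (2 / δ + 8 / r)
    set ε : ℝ := ((m:ℝ) + 8)⁻¹ with hεdef
    have hεpos : 0 < ε := by positivity
    have hεδ : 2 * ε < δ := by
      have h2δ : 0 < 2 / δ := by positivity
      have h8r : 0 < 8 / r := by positivity
      have hm8 : 2 / δ < (m:ℝ) + 8 := by linarith
      have h3 : ε < (2 / δ)⁻¹ := inv_strictAnti₀ h2δ hm8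
      rw [inv_div] at h3
      linarith
    have hεr : ε < r / 8 := by
      have h2δ : 0 < 2 / δ := by positivity
      have h8r : 0 < 8 / r := by positivity
      have hm8 : 8 / r < (m:ℝ) + 8 := by linarith
      have h3 : ε < (8 / r)⁻¹ := inv_strictAnti₀ h8r hm8
      rw [inv_div] at h3
      linarith
    have hε8 : ε ≤ 8⁻¹ := hεm8 m
    -- disk points stay in V
    have hdisk : ∀ η : X, ‖η - ((1:ℂ)/2) • ξ‖ < ε → ∀ z : ℂ, ‖z‖ ≤ 1/2 + ε →
        η + z • ξ ∈ V := by
      intro η hη z hz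
      apply hδsub
      rw [Metric.mem_thickening_iff]
      by_cases hz2 : ‖z‖ ≤ 1/2
      · refine ⟨((1:ℂ)/2 + z) • ξ, ⟨(1:ℂ)/2 + z, ?_, rfl⟩, ?_⟩
        · rw [mem_closedBall, Complex.dist_eq]
          simpa using hz2
        · rw [dist_eq_norm]
          have hd : η + z • ξ - ((1:ℂ)/2 + z) • ξ = η - ((1:ℂ)/2) • ξ := by
            rw [add_smul]; abel
          rw [hd]; linarith
      · push_neg at hz2
        have hznz : ‖z‖ ≠ 0 := by positivity
        set a : ℝ := 2⁻¹ / ‖z‖ with hadef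
        have ha0 : 0 < a := by positivity
        have ha1 : a ≤ 1 := by
          rw [hadef, div_le_one (by positivity)]; linarith
        refine ⟨((1:ℂ)/2 + (a:ℂ) * z) • ξ, ⟨(1:ℂ)/2 + (a:ℂ) * z, ?_, rfl⟩, ?_⟩
        · rw [mem_closedBall, Complex.dist_eq]
          have : (1:ℂ)/2 + (a:ℂ) * z - (1:ℂ)/2 = (a:ℂ) * z := by ring
          rw [this, norm_mul, Complex.norm_real, Real.norm_eq_abs, abs_of_pos ha0, hadef]
          rw [div_mul_cancel₀ _ hznz]
          norm_num
        · rw [dist_eq_norm]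
          have hd : η + z • ξ - ((1:ℂ)/2 + (a:ℂ) * z) • ξ
              = (η - ((1:ℂ)/2) • ξ) + (((1:ℂ) - (a:ℂ)) * z) • ξ := by
            rw [add_smul, sub_mul, one_mul, sub_smul]
            abel
          rw [hd]
          have h5 : ‖(((1:ℂ) - (a:ℂ)) * z) • ξ‖ = (1 - a) * ‖z‖ := by
            rw [norm_smul, hξ, mul_one, norm_mul]
            have : (1:ℂ) - (a:ℂ) = ((1 - a : ℝ) : ℂ) := by push_cast; ring
            rw [this, Complex.norm_real, Real.norm_eq_abs, abs_of_nonneg (by linarith)]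
          have h6 : (1 - a) * ‖z‖ = ‖z‖ - 1/2 := by
            have hcan : 2⁻¹ / ‖z‖ * ‖z‖ = 2⁻¹ := div_mul_cancel₀ _ hznz
            rw [hadef, sub_mul, one_mul, hcan]
            norm_num
          calc ‖(η - ((1:ℂ)/2) • ξ) + (((1:ℂ) - (a:ℂ)) * z) • ξ‖
              ≤ ‖η - ((1:ℂ)/2) • ξ‖ + ‖(((1:ℂ) - (a:ℂ)) * z) • ξ‖ := norm_add_le _ _
            _ < δ := by rw [h5, h6]; linarith
    -- conclusion: e belongs to U (⌈M⌉₊, m)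
    have hM0 : 0 ≤ M := by
      rw [hMdef]
      exact Finset.sum_nonneg fun c _ => by positivity
    refine ⟨(⌈M⌉₊, m), ?_⟩
    simp only [hUdef, Set.mem_setOf_eq]
    intro k η hη
    rw [← hεdef] at hη ⊢
    -- the sliced functions agree near 0 by the one-variable identity theorem
    set D : Set ℂ := {z : ℂ | η + z • ξ ∈ ball (0:X) 1} with hDdef
    have hDopen : IsOpen D := by
      have : Continuous (fun z : ℂ => η + z • ξ) :=
        continuous_const.add (continuous_id.smul continuous_const)
      exact isOpen_ball.preimage this
    have hDconv : Convex ℝ D := by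
      intro z1 hz1 z2 hz2 a b ha hb hab
      simp only [hDdef, Set.mem_setOf_eq] at *
      have hrw : η + (a • z1 + b • z2) • ξ = a • (η + z1 • ξ) + b • (η + z2 • ξ) := by
        rw [smul_add, smul_add, ← smul_assoc, ← smul_assoc, add_smul]
        have h1 : a • η + b • η = η := by rw [← add_smul, hab, one_smul]
        have h2 : a • η + (a • z1) • ξ + (b • η + (b • z2) • ξ)
            = (a • η + b • η) + ((a • z1) • ξ + (b • z2) • ξ) := by abel
        rw [h2, h1]
      rw [hrw]
      exact convex_ball (0:X) 1 hz1 hz2 ha hb hab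
    have hinnerdiff : Differentiable ℂ (fun z : ℂ => η + z • ξ) :=
      (differentiable_const η).add (differentiable_id.smul_const ξ)
    have hφ : AnalyticOnNhd ℂ (fun z : ℂ => g (η + z • ξ)) D := by
      apply DifferentiableOn.analyticOnNhd _ hDopen
      intro z hz
      exact ((hg.differentiableAt (hΩopen.mem_nhds (Or.inl hz))).comp z
        (hinnerdiff z)).differentiableWithinAt
    have hψ : AnalyticOnNhd ℂ (fun z : ℂ => P (η + z • ξ) e) D := by
      apply DifferentiableOn.analyticOnNhd _ hDopen
      intro z hz
      exact (((hP.differentiableAt (isOpen_ball.mem_nhds hz)).comp z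
        (hinnerdiff z)).clm_apply (differentiableAt_const e)).differentiableWithinAt
    set z₁ : ℂ := (((1:ℝ)/2 - r/2 : ℝ) : ℂ) with hz₁def
    have hsliceW : ∀ z ∈ ball z₁ (r/8), η + z • ξ ∈ ball (0:X) 1 ∩ W := by
      intro z hz
      rw [mem_ball] at hz
      have hzz₁ : ‖z - z₁‖ < r/8 := by rwa [← dist_eq_norm]
      have hz12 : ‖z - 1/2‖ ≤ r/2 + r/8 := by
        have h7 : z - 1/2 = (z - z₁) + (z₁ - 1/2) := by ring
        have h8 : ‖z₁ - (1:ℂ)/2‖ = r/2 := by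
          rw [hz₁def]
          have : (((1:ℝ)/2 - r/2 : ℝ) : ℂ) - 1/2 = ((-(r/2) : ℝ) : ℂ) := by push_cast; ring
          rw [this, Complex.norm_real, Real.norm_eq_abs, abs_of_nonpos (by linarith)]
          ring
        calc ‖z - 1/2‖ = ‖(z - z₁) + (z₁ - 1/2)‖ := by rw [← h7]
          _ ≤ ‖z - z₁‖ + ‖z₁ - (1:ℂ)/2‖ := norm_add_le _ _
          _ ≤ r/2 + r/8 := by rw [h8]; linarith
      constructor
      · rw [mem_ball_zero_iff]
        have hd : η + z • ξ = (η - ((1:ℂ)/2) • ξ) + (((1:ℂ)/2 + z) • ξ) := by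
          rw [add_smul]; abel
        have h9 : ‖((1:ℂ)/2 + z) • ξ‖ = ‖(1:ℂ)/2 + z‖ := by rw [norm_smul, hξ, mul_one]
        have h10 : ‖(1:ℂ)/2 + z‖ ≤ ‖(1:ℂ)/2 + z₁‖ + ‖z - z₁‖ := by
          have h7 : (1:ℂ)/2 + z = ((1:ℂ)/2 + z₁) + (z - z₁) := by ring
          rw [h7]; exact norm_add_le _ _
        have h11 : ‖(1:ℂ)/2 + z₁‖ = 1 - r/2 := by
          rw [hz₁def]
          have : (1:ℂ)/2 + (((1:ℝ)/2 - r/2 : ℝ) : ℂ) = ((1 - r/2 : ℝ) : ℂ) := by push_cast; ring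
          rw [this, Complex.norm_real, Real.norm_eq_abs, abs_of_nonneg (by linarith)]
        rw [hd]
        calc ‖(η - ((1:ℂ)/2) • ξ) + (((1:ℂ)/2 + z) • ξ)‖
            ≤ ‖η - ((1:ℂ)/2) • ξ‖ + ‖((1:ℂ)/2 + z) • ξ‖ := norm_add_le _ _
          _ < 1 := by rw [h9]; rw [h11] at h10; linarith
      · apply hballr
        rw [mem_ball, dist_eq_norm]
        have hd : η + z • ξ - ξ = (η - ((1:ℂ)/2) • ξ) + ((z - (1:ℂ)/2) • ξ) := by
          module
        rw [hd]
        have h9 : ‖(z - (1:ℂ)/2) • ξ‖ = ‖z - (1:ℂ)/2‖ := by rw [norm_smul, hξ, mul_one]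
        calc ‖(η - ((1:ℂ)/2) • ξ) + ((z - (1:ℂ)/2) • ξ)‖
            ≤ ‖η - ((1:ℂ)/2) • ξ‖ + ‖(z - (1:ℂ)/2) • ξ‖ := norm_add_le _ _
          _ < r := by
              rw [h9]
              have := hz12
              simp only [one_div] at this ⊢
              linarith
    have hz₁D : z₁ ∈ D := (hsliceW z₁ (mem_ball_self (by positivity))).1
    have heqz : Set.EqOn (fun z : ℂ => g (η + z • ξ)) (fun z : ℂ => P (η + z • ξ) e) D := by
      apply AnalyticOnNhd.eqOn_of_preconnected_of_eventuallyEq hφ hψ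
        hDconv.isPreconnected hz₁D
      apply Filter.eventuallyEq_of_mem (Metric.ball_mem_nhds z₁ (by positivity : (0:ℝ) < r/8))
      intro z hz
      exact heqg (hsliceW z hz)
    -- Cauchy estimates for g along the slice
    have hRpos : (0:ℝ) < 1/2 + ε := by positivity
    have hf1diff : DifferentiableOn ℂ (fun z : ℂ => g (η + z • ξ)) (closedBall 0 (1/2 + ε)) := by
      intro z hz
      rw [mem_closedBall, Complex.dist_eq, sub_zero] at hz
      have hmem : η + z • ξ ∈ V := hdisk η hη z hz
      exact ((hg.differentiableAt (hΩopen.mem_nhds (hVsub hmem))).comp z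
        (hinnerdiff z)).differentiableWithinAt
    have hf1bd : ∀ z ∈ closedBall (0:ℂ) (1/2 + ε), ‖g (η + z • ξ)‖ ≤ M := by
      intro z hz
      rw [mem_closedBall, Complex.dist_eq, sub_zero] at hz
      exact hVbd _ (hdisk η hη z hz)
    have hest := cauchy_estimate hRpos hf1diff hf1bd k
    have heqderiv : iteratedDeriv k (fun z : ℂ => P (η + z • ξ) e) 0
        = iteratedDeriv k (fun z : ℂ => g (η + z • ξ)) 0 := by
      have heq2 : Set.EqOn (fun z : ℂ => g (η + z • ξ)) (fun z : ℂ => P (η + z • ξ) e)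
          (ball (0:ℂ) 4⁻¹) := by
        intro z hz
        exact heqz (hkey ε hε8 η hη z (mem_ball_zero_iff.1 hz))
      exact (heq2.iteratedDeriv_of_isOpen isOpen_ball k (mem_ball_self (by norm_num))).symm
    rw [heqderiv]
    refine hest.trans ?_
    have hMn : M ≤ (⌈M⌉₊ : ℝ) + 1 := (Nat.le_ceil M).trans (le_add_of_nonneg_right zero_le_one)
    have hc : (0:ℝ) ≤ ((1/2 + ε)⁻¹) ^ k := by positivity
    have hk : (0:ℝ) ≤ (Nat.factorial k : ℝ) := Nat.cast_nonneg _
    exact mul_le_mul_of_nonneg_right (mul_le_mul_of_nonneg_right hMn hk) hc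
  obtain ⟨⟨n, m⟩, hne⟩ := nonempty_interior_of_iUnion_of_closed hclosed hcover
  exact ⟨(n:ℝ) + 1, by positivity, ((m:ℝ) + 8)⁻¹, by positivity, hne⟩
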